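/- For the α-partial SWAP gate U_PS(α) = cos(α/2)·id + i·sin(α/2)·U_SWAP on two qubits, the induced steering-like POVM assemblage G_{B|A} = Tr_A[U_PS(α)† (id ⊗ F_B) U_PS(α) (id ⊗ ρ_A)] can be rewritten as G_{b|a} = cos²(α/2)·Tr(F_b ρ_a)·id + sin²(α/2)·F_b − i·sin(α/2)cos(α/2)·[F_b, ρ_a]. -/

import Mathlib

open scoped Kronecker ComplexOrder
open Finset Matrix

/-- Partial trace over the second tensor factor. -/
noncomputable def ptSnd {m n : Type} [Fintype n] (M : Matrix (m × n) (m × n) ℂ) :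
    Matrix m m ℂ :=
  Matrix.of fun i j => ∑ k : n, M (i, k) (j, k)

/-- The two-qubit SWAP unitary. -/
def Uswap : Matrix (Fin 2 × Fin 2) (Fin 2 × Fin 2) ℂ :=
  Matrix.of fun x y => if x.1 = y.2 ∧ x.2 = y.1 then 1 else 0

/-- The α-partial SWAP gate `U_PS(α) = cos(α/2)·id + i·sin(α/2)·U_SWAP`. -/
noncomputable def UPS (α : ℝ) : Matrix (Fin 2 × Fin 2) (Fin 2 × Fin 2) ℂ :=
  ((Real.cos (α / 2) : ℝ) : ℂ) • (1 : Matrix (Fin 2 × Fin 2) (Fin 2 × Fin 2) ℂ)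
    + (Complex.I * ((Real.sin (α / 2) : ℝ) : ℂ)) • Uswap

/-- For the α-partial SWAP gate, the induced steering-like POVM
assemblage `G_{b|a} = Tr_A[U_PS(α)† (id ⊗ F_b) U_PS(α) (id ⊗ ρ_a)]` (trace over
the second, "A", tensor factor; the environment `E` is the first factor) can be
rewritten as
`G_{b|a} = cos²(α/2)·Tr(F_b ρ_a)·id + sin²(α/2)·F_b − i·sin(α/2)cos(α/2)·[F_b, ρ_a]`. -/
theorem stmt_13 (α : ℝ)
    (ρ : Fin 2 → Matrix (Fin 2) (Fin 2) ℂ)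
    (hρ : ∀ a, (ρ a).PosSemidef ∧ (ρ a).trace = 1)
    (F : Fin 2 → Matrix (Fin 2) (Fin 2) ℂ)
    (hF : ∀ b, (F b).PosSemidef) (hF1 : ∑ b, F b = 1) :
    ∀ (a b : Fin 2),
      ptSnd ((UPS α)ᴴ * ((1 : Matrix (Fin 2) (Fin 2) ℂ) ⊗ₖ F b) * UPS α *
          ((1 : Matrix (Fin 2) (Fin 2) ℂ) ⊗ₖ ρ a))
      = (((Real.cos (α / 2) ^ 2 : ℝ) : ℂ) * (F b * ρ a).trace) •
          (1 : Matrix (Fin 2) (Fin 2) ℂ)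
        + ((Real.sin (α / 2) ^ 2 : ℝ) : ℂ) • F b
        - (Complex.I * ((Real.sin (α / 2) : ℝ) : ℂ) * ((Real.cos (α / 2) : ℝ) : ℂ)) •
            (F b * ρ a - ρ a * F b) := by
  intro a b
  have hc : (starRingEnd ℂ) (Complex.cos ((α : ℂ) / 2)) = Complex.cos ((α : ℂ) / 2) := by
    rw [show ((α:ℂ)/2) = ((α/2 : ℝ) : ℂ) by push_cast; ring, ← Complex.ofReal_cos, Complex.conj_ofReal]
  have hs : (starRingEnd ℂ) (Complex.sin ((α : ℂ) / 2)) = Complex.sin ((α : ℂ) / 2) := by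
    rw [show ((α:ℂ)/2) = ((α/2 : ℝ) : ℂ) by push_cast; ring, ← Complex.ofReal_sin, Complex.conj_ofReal]
  have htr : ρ a 0 0 + ρ a 1 1 = 1 := by
    have := (hρ a).2
    simpa [Matrix.trace, Fin.sum_univ_two] using this
  ext i j
  simp only [ptSnd, UPS, Uswap, Matrix.mul_apply, Matrix.trace, Matrix.diag,
    Matrix.conjTranspose_apply, Matrix.one_apply, Matrix.kroneckerMap_apply,
    Matrix.smul_apply, Matrix.add_apply, Matrix.sub_apply, Matrix.of_apply,
    Fintype.sum_prod_type, Fin.sum_univ_two, Prod.mk.injEq, smul_eq_mul,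
    map_add, _root_.map_mul, Complex.conj_ofReal, Complex.conj_I,
    MonoidWithZeroHom.map_ite_one_zero, mul_ite, ite_mul, mul_one, mul_zero, one_mul, zero_mul]
  fin_cases i <;> fin_cases j <;>
    simp only [Fin.isValue, Matrix.cons_val_zero, Matrix.cons_val_one, Matrix.head_cons,
      Prod.mk.injEq, if_true, if_false, and_self, and_true, true_and, Fin.zero_eta, Fin.mk_one] <;>
    norm_num <;>
    simp only [hc, hs, Complex.I_sq] <;>
    first
    | linear_combination (Complex.sin ((α:ℂ)/2))^2 * F b 0 0 * htr - (Complex.sin ((α:ℂ)/2))^2 * F b 0 0 * (ρ a 0 0 + ρ a 1 1) * Complex.I_sq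
    | linear_combination (Complex.sin ((α:ℂ)/2))^2 * F b 0 1 * htr - (Complex.sin ((α:ℂ)/2))^2 * F b 0 1 * (ρ a 0 0 + ρ a 1 1) * Complex.I_sq
    | linear_combination (Complex.sin ((α:ℂ)/2))^2 * F b 1 0 * htr - (Complex.sin ((α:ℂ)/2))^2 * F b 1 0 * (ρ a 0 0 + ρ a 1 1) * Complex.I_sq
    | linear_combination (Complex.sin ((α:ℂ)/2))^2 * F b 1 1 * htr - (Complex.sin ((α:ℂ)/2))^2 * F b 1 1 * (ρ a 0 0 + ρ a 1 1) * Complex.I_sq
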